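/- Let G be a finite group acting on a finite set M with quotient set M/G. Using weights e_M(x) = 1 on M and e_{M/G}([x]) = 1 on M/G, and for each conjugacy class representative g the weighted quotient data on M^g/C_G(g), the total weighted pushforward to M/G of the constant function 1 on ⊔_{(g)} M^g/C_G(g) — where a class [x] ∈ M^g/C_G(g) is weighted by the order of its stabilizer in C_G(g) — equals the constant function 1 on M/G. Concretely: for every x ∈ M, Σ over conjugacy class representatives g with M^g ∩ G·x ≠ ∅ of Σ_{[x'] ∈ (M^g ∩ G·x)/C_G(g)} 1/|Stab_{C_G(g)}(x')| = 1. -/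

import Mathlib

/-- The fixed locus of `g` intersected with the `G`-orbit of `x`, as a subtype. -/
def FixedInOrbit (G M : Type*) [Group G] [MulAction G M] (g : G) (x : M) : Type _ :=
  {y : M // g • y = y ∧ y ∈ MulAction.orbit G x}

/-- The centralizer `C_G(g)` acts on `M^g ∩ G·x`. -/
instance FixedInOrbit.mulAction (G M : Type*) [Group G] [MulAction G M]
    (g : G) (x : M) :
    MulAction (Subgroup.centralizer ({g} : Set G)) (FixedInOrbit G M g x) where
  smul h y := ⟨(h : G) • y.1,
    by
      obtain ⟨hy1, hy2⟩ := y.2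
      constructor
      · have hc : g * (h : G) = (h : G) * g :=
          Subgroup.mem_centralizer_iff.mp h.2 g rfl
        calc g • (h : G) • y.1 = (g * (h : G)) • y.1 := (mul_smul _ _ _).symm
          _ = ((h : G) * g) • y.1 := by rw [hc]
          _ = (h : G) • g • y.1 := mul_smul _ _ _
          _ = (h : G) • y.1 := by rw [hy1]
      · obtain ⟨k, hk⟩ := MulAction.mem_orbit_iff.mp hy2
        exact MulAction.mem_orbit_iff.mpr ⟨(h : G) * k, by rw [mul_smul, hk]⟩⟩
  one_smul y := Subtype.ext (one_smul G y.1)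
  mul_smul a b y := Subtype.ext (mul_smul (a : G) (b : G) y.1)


section Aux

open MulAction

variable {G M : Type*} [Group G] [Fintype G] [Fintype M] [MulAction G M]

instance FixedInOrbit.finite (g : G) (x : M) : Finite (FixedInOrbit G M g x) :=
  inferInstanceAs (Finite {y : M // g • y = y ∧ y ∈ MulAction.orbit G x})

/-- Conjugation equivalence between fixed-point sets in an orbit. -/
def FixedInOrbit.conjEquiv (h g : G) (x : M) :
    FixedInOrbit G M (h * g * h⁻¹) x ≃ FixedInOrbit G M g x where
  toFun y := ⟨h⁻¹ • y.1, by
    refine ⟨?_, ?_⟩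
    · calc g • h⁻¹ • y.1 = (g * h⁻¹) • y.1 := (mul_smul _ _ _).symm
        _ = (h⁻¹ * (h * g * h⁻¹)) • y.1 := by group
        _ = h⁻¹ • (h * g * h⁻¹) • y.1 := mul_smul _ _ _
        _ = h⁻¹ • y.1 := by rw [y.2.1]
    · obtain ⟨k, hk⟩ := MulAction.mem_orbit_iff.mp y.2.2
      exact MulAction.mem_orbit_iff.mpr ⟨h⁻¹ * k, by rw [mul_smul, hk]⟩⟩
  invFun y := ⟨h • y.1, by
    refine ⟨?_, ?_⟩
    · calc (h * g * h⁻¹) • h • y.1 = ((h * g * h⁻¹) * h) • y.1 := (mul_smul _ _ _).symm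
        _ = (h * g) • y.1 := by group
        _ = h • g • y.1 := mul_smul _ _ _
        _ = h • y.1 := by rw [y.2.1]
    · obtain ⟨k, hk⟩ := MulAction.mem_orbit_iff.mp y.2.2
      exact MulAction.mem_orbit_iff.mpr ⟨h * k, by rw [mul_smul, hk]⟩⟩
  left_inv y := Subtype.ext (smul_inv_smul h y.1)
  right_inv y := Subtype.ext (inv_smul_smul h y.1)

theorem FixedInOrbit.card_conj (h g : G) (x : M) :
    Nat.card (FixedInOrbit G M (h * g * h⁻¹) x) = Nat.card (FixedInOrbit G M g x) :=
  Nat.card_congr (FixedInOrbit.conjEquiv h g x)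

/-- `FixedInOrbit G M g x` is the fixed set of `g` on the orbit of `x`. -/
def FixedInOrbit.equivFixedBy (g : G) (x : M) :
    FixedInOrbit G M g x ≃ MulAction.fixedBy (MulAction.orbit G x) g where
  toFun y := ⟨⟨y.1, y.2.2⟩, Subtype.ext y.2.1⟩
  invFun z := ⟨z.1.1, ⟨congrArg Subtype.val z.2, z.1.2⟩⟩
  left_inv y := rfl
  right_inv z := rfl

/-- Burnside's lemma specialized to the (transitive) orbit of `x`. -/
theorem FixedInOrbit.sum_card (x : M) :
    ∑ g : G, Nat.card (FixedInOrbit G M g x) = Nat.card G := by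
  classical
  have hcongr : ∀ g : G, Nat.card (FixedInOrbit G M g x)
      = Fintype.card (MulAction.fixedBy (MulAction.orbit G x) g) := fun g => by
    rw [Nat.card_congr (FixedInOrbit.equivFixedBy g x), Nat.card_eq_fintype_card]
  simp_rw [hcongr]
  letI : Fintype (MulAction.orbitRel.Quotient G (MulAction.orbit G x)) := Fintype.ofFinite _
  rw [MulAction.sum_card_fixedBy_eq_card_orbits_mul_card_group G (MulAction.orbit G x)]
  have h1 : Fintype.card (MulAction.orbitRel.Quotient G (MulAction.orbit G x)) = 1 := by
    haveI : Subsingleton (MulAction.orbitRel.Quotient G (MulAction.orbit G x)) :=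
      (MulAction.pretransitive_iff_subsingleton_quotient G (MulAction.orbit G x)).mp inferInstance
    haveI : Nonempty (MulAction.orbitRel.Quotient G (MulAction.orbit G x)) :=
      ⟨Quotient.mk'' ⟨x, MulAction.mem_orbit_self x⟩⟩
    exact Fintype.card_eq_one_iff_nonempty_unique.mpr
      ⟨uniqueOfSubsingleton (Classical.arbitrary _)⟩
  rw [h1, one_mul, Nat.card_eq_fintype_card]

/-- Orbit-stabilizer identity for the centralizer and conjugacy class. -/
theorem card_carrier_mul_card_centralizer (g : G) :
    Nat.card (ConjClasses.mk g).carrier * Nat.card (Subgroup.centralizer ({g} : Set G))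
      = Nat.card G := by
  classical
  letI : Fintype (MulAction.orbit (ConjAct G) g) := Fintype.ofFinite _
  have h := MulAction.card_orbit_mul_card_stabilizer_eq_card_group (ConjAct G) g
  have h1 : Nat.card (ConjClasses.mk g).carrier = Fintype.card (MulAction.orbit (ConjAct G) g) := by
    rw [← ConjAct.orbit_eq_carrier_conjClasses, Nat.card_eq_fintype_card]
  have h2 : Nat.card (Subgroup.centralizer ({g} : Set G))
      = Fintype.card (MulAction.stabilizer (ConjAct G) g) := by
    rw [Subgroup.centralizer_eq_comap_stabilizer, ← Nat.card_eq_fintype_card]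
    exact Nat.card_congr (ConjAct.toConjAct.toEquiv.subtypeEquiv fun k => Iff.rfl)
  rw [h1, h2, h]
  have : Fintype.card (ConjAct G) = Fintype.card G :=
    Fintype.card_congr ConjAct.ofConjAct.toEquiv
  rw [this, Nat.card_eq_fintype_card]

/-- The inner sum over orbit classes equals `|F| / |C|`. -/
theorem inner_sum_eq (g : G) (x : M) :
    (∑ᶠ S : Quotient (MulAction.orbitRel
        (Subgroup.centralizer ({g} : Set G)) (FixedInOrbit G M g x)),
      (1 : ℚ) / Nat.card (MulAction.stabilizer
        (Subgroup.centralizer ({g} : Set G)) (Quotient.out S)))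
    = (Nat.card (FixedInOrbit G M g x) : ℚ)
        / (Nat.card (Subgroup.centralizer ({g} : Set G)) : ℚ) := by
  classical
  set C := Subgroup.centralizer ({g} : Set G) with hC
  set F := FixedInOrbit G M g x with hF
  letI : Fintype F := Fintype.ofFinite F
  letI : Fintype (Quotient (MulAction.orbitRel C F)) := Fintype.ofFinite _
  rw [finsum_eq_sum_of_fintype]
  have hCpos : 0 < (Nat.card C : ℚ) := by
    exact_mod_cast Nat.card_pos
  have hterm : ∀ S : Quotient (MulAction.orbitRel C F),
      (1 : ℚ) / Nat.card (MulAction.stabilizer C (Quotient.out S))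
      = (Nat.card (MulAction.orbit C (Quotient.out S)) : ℚ) / Nat.card C := by
    intro S
    letI : Fintype (MulAction.orbit C (Quotient.out S)) := Fintype.ofFinite _
    have h := MulAction.card_orbit_mul_card_stabilizer_eq_card_group C (Quotient.out S)
    have hstabpos : 0 < (Nat.card (MulAction.stabilizer C (Quotient.out S)) : ℚ) := by
      exact_mod_cast Nat.card_pos
    rw [div_eq_div_iff hstabpos.ne' hCpos.ne', one_mul]
    have : (Nat.card (MulAction.orbit C (Quotient.out S)) : ℕ)
        * Nat.card (MulAction.stabilizer C (Quotient.out S)) = Nat.card C := by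
      simpa [Nat.card_eq_fintype_card] using h
    exact_mod_cast this.symm
  rw [Finset.sum_congr rfl (fun S _ => hterm S)]
  rw [← Finset.sum_div]
  congr 1
  letI : ∀ S : Quotient (MulAction.orbitRel C F), Fintype (MulAction.orbit C (Quotient.out S)) :=
    fun S => Fintype.ofFinite _
  have hsum : Fintype.card F
      = ∑ S : Quotient (MulAction.orbitRel C F),
          Fintype.card (MulAction.orbit C (Quotient.out S)) := by
    rw [← Fintype.card_sigma]
    exact Fintype.card_congr (MulAction.selfEquivSigmaOrbits C F)
  simp_rw [Nat.card_eq_fintype_card]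
  exact_mod_cast hsum.symm

end Aux

/-- Proposition 3.3 of the paper at the level of finite group actions: for every
`x ∈ M`, summing over conjugacy class representatives `g` and over the
`C_G(g)`-orbit classes `[x']` of `M^g ∩ G·x` the quantities `1/|Stab_{C_G(g)}(x')|`
gives `1`. -/
theorem sum_over_inertia_orbits_eq_one
    (G M : Type*) [Group G] [Fintype G] [DecidableEq G] [Fintype M] [MulAction G M]
    (x : M) :
    ∑ c : ConjClasses G,
      ∑ᶠ S : Quotient (MulAction.orbitRel
          (Subgroup.centralizer ({Quotient.out c} : Set G))
          (FixedInOrbit G M (Quotient.out c) x)),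
        (1 : ℚ) / Nat.card (MulAction.stabilizer
          (Subgroup.centralizer ({Quotient.out c} : Set G)) (Quotient.out S)) = 1 := by
  classical
  have key : ∀ c : ConjClasses G,
      (∑ᶠ S : Quotient (MulAction.orbitRel
          (Subgroup.centralizer ({Quotient.out c} : Set G))
          (FixedInOrbit G M (Quotient.out c) x)),
        (1 : ℚ) / Nat.card (MulAction.stabilizer
          (Subgroup.centralizer ({Quotient.out c} : Set G)) (Quotient.out S)))
      = (Nat.card (FixedInOrbit G M (Quotient.out c) x) : ℚ)
          / (Nat.card (Subgroup.centralizer ({Quotient.out c} : Set G)) : ℚ) :=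
    fun c => inner_sum_eq (Quotient.out c) x
  simp_rw [key]
  have hGpos : 0 < (Nat.card G : ℚ) := by exact_mod_cast Nat.card_pos
  -- rewrite each term as N(c.out) * |carrier c| / |G|
  have step : ∀ c : ConjClasses G,
      (Nat.card (FixedInOrbit G M (Quotient.out c) x) : ℚ)
          / (Nat.card (Subgroup.centralizer ({Quotient.out c} : Set G)) : ℚ)
      = (Nat.card c.carrier : ℚ) * Nat.card (FixedInOrbit G M (Quotient.out c) x)
          / Nat.card G := by
    intro c
    have h := card_carrier_mul_card_centralizer (G := G) (Quotient.out c)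
    have hq : ConjClasses.mk (Quotient.out c) = c := Quotient.out_eq c
    rw [hq] at h
    have hCpos : 0 < (Nat.card (Subgroup.centralizer ({Quotient.out c} : Set G)) : ℚ) := by
      exact_mod_cast Nat.card_pos
    rw [div_eq_div_iff hCpos.ne' hGpos.ne']
    have : (Nat.card c.carrier : ℚ) * Nat.card (Subgroup.centralizer ({Quotient.out c} : Set G))
        = Nat.card G := by exact_mod_cast h
    calc (Nat.card (FixedInOrbit G M (Quotient.out c) x) : ℚ) * Nat.card G
        = (Nat.card (FixedInOrbit G M (Quotient.out c) x) : ℚ)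
            * ((Nat.card c.carrier : ℚ)
              * Nat.card (Subgroup.centralizer ({Quotient.out c} : Set G))) := by rw [this]
      _ = (Nat.card c.carrier : ℚ) * Nat.card (FixedInOrbit G M (Quotient.out c) x)
            * Nat.card (Subgroup.centralizer ({Quotient.out c} : Set G)) := by ring
  simp_rw [step]
  rw [← Finset.sum_div, div_eq_one_iff_eq (ne_of_gt hGpos)]
  -- now: sum over conjugacy classes of |carrier| * N(out) = |G|
  have fiber : ∀ c : ConjClasses G,
      (Nat.card c.carrier : ℚ) * Nat.card (FixedInOrbit G M (Quotient.out c) x)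
      = ∑ g ∈ Finset.univ.filter (fun g => ConjClasses.mk g = c),
          (Nat.card (FixedInOrbit G M g x) : ℚ) := by
    intro c
    have hconst : ∀ g ∈ Finset.univ.filter (fun g => ConjClasses.mk g = c),
        (Nat.card (FixedInOrbit G M g x) : ℚ)
        = (Nat.card (FixedInOrbit G M (Quotient.out c) x) : ℚ) := by
      intro g hg
      rw [Finset.mem_filter] at hg
      have hconj : IsConj (Quotient.out c) g := by
        rw [← ConjClasses.mk_eq_mk_iff_isConj, hg.2]
        exact Quotient.out_eq c
      obtain ⟨h, hh⟩ := isConj_iff.mp hconj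
      rw [← hh, FixedInOrbit.card_conj]
    rw [Finset.sum_congr rfl hconst, Finset.sum_const, nsmul_eq_mul]
    congr 2
    have : Nat.card c.carrier = Fintype.card {g : G // ConjClasses.mk g = c} := by
      rw [← Nat.card_eq_fintype_card]
      exact Nat.card_congr (Equiv.subtypeEquivRight fun g =>
        ConjClasses.mem_carrier_iff_mk_eq)
    rw [this, Fintype.card_subtype]
  simp_rw [fiber]
  rw [Finset.sum_fiberwise Finset.univ (fun g => ConjClasses.mk g)
    (fun g => (Nat.card (FixedInOrbit G M g x) : ℚ))]
  rw [← Nat.cast_sum, FixedInOrbit.sum_card x]
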